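/- arXiv:1909.09228 — 2 statements merged into one kernel-verified Lean document; each statement's English description precedes it below -/
import Mathlib

section
/- If there exists at least one agent i with π_{iθ} ≠ π*_i, then for every agent i, (1/t) log μ_{it} converges in probability to −(1/m) ∑_{i=1}^m D_KL(π*_i ‖ π_{iθ}), where D_KL(p‖q) = ∑_{k=1}^K p_k log(p_k/q_k) is the Kullback–Leibler divergence. -/
open MeasureTheory ProbabilityTheory Filter Finset

/-- Number of times category `k` was observed among the first `t` signals
(the signal at time `τ ≥ 1` is `X (τ - 1)`, i.e. `X` is indexed from `0`). -/
def sigCount {Ω : Type*} {K : ℕ} (X : ℕ → Ω → Fin K) (k : Fin K) (t : ℕ) (x : Ω) : ℕ :=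
  ((Finset.range t).filter (fun τ => X τ x = k)).card

/-- Kullback–Leibler divergence between two probability vectors on `Fin K`. -/
noncomputable def KLdiv {K : ℕ} (p q : Fin K → ℝ) : ℝ :=
  ∑ k, p k * Real.log (p k / q k)

/-! ### Auxiliary deterministic matrix lemmas -/

section Det
variable {m : ℕ}

lemma llcr_pow_row_sum (A : Matrix (Fin m) (Fin m) ℝ) (hA_row : ∀ i, ∑ j, A i j = 1) :
    ∀ n i, ∑ j, (A ^ n) i j = 1 := by
  intro n
  induction n with
  | zero => intro i; simp [Matrix.one_apply]
  | succ n ih =>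
    intro i
    rw [pow_succ']
    simp only [Matrix.mul_apply]
    rw [Finset.sum_comm]
    have : ∀ k ∈ Finset.univ, A i k * (∑ j, (A ^ n) k j) = A i k := by
      intro k _; rw [ih k, mul_one]
    calc ∑ k, ∑ j, A i k * (A ^ n) k j = ∑ k, A i k * ∑ j, (A ^ n) k j := by
          simp [Finset.mul_sum]
      _ = ∑ k, A i k := Finset.sum_congr rfl this
      _ = 1 := hA_row i

lemma llcr_pow_col_sum (A : Matrix (Fin m) (Fin m) ℝ) (hA_col : ∀ j, ∑ i, A i j = 1) :
    ∀ n j, ∑ i, (A ^ n) i j = 1 := by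
  intro n
  induction n with
  | zero => intro j; simp [Matrix.one_apply]
  | succ n ih =>
    intro j
    rw [pow_succ]
    simp only [Matrix.mul_apply]
    rw [Finset.sum_comm]
    calc ∑ k, ∑ i, (A ^ n) i k * A k j = ∑ k, (∑ i, (A ^ n) i k) * A k j := by
          simp [Finset.sum_mul]
      _ = ∑ k, A k j := by
          refine Finset.sum_congr rfl fun k _ => by rw [ih k, one_mul]
      _ = 1 := hA_col j

lemma llcr_pow_nonneg_entry (A : Matrix (Fin m) (Fin m) ℝ) (hA : ∀ i j, 0 ≤ A i j) :
    ∀ n i j, 0 ≤ (A ^ n) i j := by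
  intro n
  induction n with
  | zero => intro i j; by_cases h : i = j <;> simp [Matrix.one_apply, h]
  | succ n ih =>
    intro i j
    rw [pow_succ, Matrix.mul_apply]
    exact Finset.sum_nonneg fun k _ => mul_nonneg (ih i k) (hA k j)

/-- Oscillation contraction under a stochastic matrix with entries `≥ δ`. -/
lemma llcr_osc_mulVec (B : Matrix (Fin m) (Fin m) ℝ) (hrow : ∀ i, ∑ j, B i j = 1)
    (δ : ℝ) (hδ : ∀ i j, δ ≤ B i j) (hmδ : (m : ℝ) * δ ≤ 1)
    (v : Fin m → ℝ) (D : ℝ) (hv : ∀ i j, v i - v j ≤ D) :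
    ∀ i j, B.mulVec v i - B.mulVec v j ≤ (1 - m * δ) * D := by
  intro i j
  have hne : (Finset.univ : Finset (Fin m)).Nonempty := ⟨i, Finset.mem_univ i⟩
  obtain ⟨i0, _, hi0⟩ := Finset.exists_max_image Finset.univ v hne
  obtain ⟨j0, _, hj0⟩ := Finset.exists_min_image Finset.univ v hne
  set c : Fin m → ℝ := fun k => min (B i k) (B j k) with hc
  have hcB1 : ∀ k, c k ≤ B i k := fun k => min_le_left _ _
  have hcB2 : ∀ k, c k ≤ B j k := fun k => min_le_right _ _
  have hcδ : ∀ k, δ ≤ c k := fun k => le_min (hδ i k) (hδ j k)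
  have hw : (m : ℝ) * δ ≤ ∑ k, c k := by
    calc (m : ℝ) * δ = ∑ _k : Fin m, δ := by simp [mul_comm]
      _ ≤ ∑ k, c k := Finset.sum_le_sum fun k _ => hcδ k
  have key : B.mulVec v i - B.mulVec v j
      = ∑ k, (B i k - c k) * v k - ∑ k, (B j k - c k) * v k := by
    simp only [Matrix.mulVec, dotProduct]
    rw [← Finset.sum_sub_distrib, ← Finset.sum_sub_distrib]
    congr 1; ext k; ring
  have h1 : ∑ k, (B i k - c k) * v k ≤ (1 - ∑ k, c k) * v i0 := by
    have : ∑ k, (B i k - c k) * v k ≤ ∑ k, (B i k - c k) * v i0 :=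
      Finset.sum_le_sum fun k _ => by
        have h0 : 0 ≤ B i k - c k := sub_nonneg.2 (hcB1 k)
        exact mul_le_mul_of_nonneg_left (hi0 k (Finset.mem_univ k)) h0
    calc ∑ k, (B i k - c k) * v k ≤ ∑ k, (B i k - c k) * v i0 := this
      _ = (∑ k, (B i k - c k)) * v i0 := by rw [Finset.sum_mul]
      _ = (1 - ∑ k, c k) * v i0 := by rw [Finset.sum_sub_distrib, hrow i]
  have h2 : (1 - ∑ k, c k) * v j0 ≤ ∑ k, (B j k - c k) * v k := by
    have : ∑ k, (B j k - c k) * v j0 ≤ ∑ k, (B j k - c k) * v k :=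
      Finset.sum_le_sum fun k _ => by
        have h0 : 0 ≤ B j k - c k := sub_nonneg.2 (hcB2 k)
        exact mul_le_mul_of_nonneg_left (hj0 k (Finset.mem_univ k)) h0
    calc (1 - ∑ k, c k) * v j0 = (∑ k, (B j k - c k)) * v j0 := by
          rw [Finset.sum_sub_distrib, hrow j]
      _ = ∑ k, (B j k - c k) * v j0 := by rw [Finset.sum_mul]
      _ ≤ ∑ k, (B j k - c k) * v k := this
  have hD0 : v i0 - v j0 ≤ D := hv i0 j0
  have hosc0 : 0 ≤ v i0 - v j0 := by
    linarith [hi0 j0 (Finset.mem_univ j0)]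
  have hcs : ∑ k, c k ≤ 1 := by
    calc ∑ k, c k ≤ ∑ k, B i k := Finset.sum_le_sum fun k _ => hcB1 k
      _ = 1 := hrow i
  calc B.mulVec v i - B.mulVec v j
      = ∑ k, (B i k - c k) * v k - ∑ k, (B j k - c k) * v k := key
    _ ≤ (1 - ∑ k, c k) * v i0 - (1 - ∑ k, c k) * v j0 := by linarith
    _ = (1 - ∑ k, c k) * (v i0 - v j0) := by ring
    _ ≤ (1 - (m : ℝ) * δ) * (v i0 - v j0) := by
        apply mul_le_mul_of_nonneg_right _ hosc0; linarith
    _ ≤ (1 - (m : ℝ) * δ) * D := by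
        apply mul_le_mul_of_nonneg_left hD0; linarith

lemma llcr_osc_pow_weak (A : Matrix (Fin m) (Fin m) ℝ)
    (hA_nonneg : ∀ i j, 0 ≤ A i j) (hA_row : ∀ i, ∑ j, A i j = 1)
    (v : Fin m → ℝ) (D : ℝ) (hv : ∀ i j, v i - v j ≤ D) :
    ∀ n i j, ((A ^ n).mulVec v) i - ((A ^ n).mulVec v) j ≤ D := by
  intro n
  induction n with
  | zero => intro i j; simpa using hv i j
  | succ n ihn =>
    intro i j
    have hsplit : (A ^ (n+1)) = A * (A ^ n) := by rw [pow_succ']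
    rw [hsplit, ← Matrix.mulVec_mulVec]
    have := llcr_osc_mulVec A hA_row 0 (fun i j => hA_nonneg i j) (by simp)
      ((A ^ n).mulVec v) D ihn i j
    simpa using this

lemma llcr_osc_pow (A : Matrix (Fin m) (Fin m) ℝ)
    (hA_nonneg : ∀ i j, 0 ≤ A i j) (hA_row : ∀ i, ∑ j, A i j = 1)
    (N : ℕ) (hN : 1 ≤ N) (δ : ℝ) (hδ0 : 0 ≤ δ) (hδ : ∀ i j, δ ≤ (A ^ N) i j)
    (v : Fin m → ℝ) (D : ℝ) (hv : ∀ i j, v i - v j ≤ D) :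
    ∀ n i j, ((A ^ n).mulVec v) i - ((A ^ n).mulVec v) j ≤ (1 - m * δ) ^ (n / N) * D := by
  intro n
  induction n using Nat.strong_induction_on with
  | _ n ih =>
    intro i j
    have hm1 : 0 < m := i.pos
    have hmδ : (m : ℝ) * δ ≤ 1 := by
      have hsum := llcr_pow_row_sum A hA_row N i
      have he : (m : ℝ) * δ = ∑ _k : Fin m, δ := by simp [mul_comm]
      rw [he, ← hsum]
      exact Finset.sum_le_sum fun k _ => hδ i k
    rcases lt_or_ge n N with hlt | hge
    · have hdiv : n / N = 0 := Nat.div_eq_of_lt hlt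
      rw [hdiv, pow_zero, one_mul]
      exact llcr_osc_pow_weak A hA_nonneg hA_row v D hv n i j
    · have hn' : n - N < n := by omega
      have hrec : ∀ i' j', ((A ^ (n - N)).mulVec v) i' - ((A ^ (n - N)).mulVec v) j'
          ≤ (1 - m * δ) ^ ((n - N) / N) * D := fun i' j' => ih (n - N) hn' i' j'
      have hsplit : (A ^ n) = (A ^ N) * (A ^ (n - N)) := by
        rw [← pow_add]; congr 1; omega
      rw [hsplit, ← Matrix.mulVec_mulVec]
      have := llcr_osc_mulVec (A ^ N) (llcr_pow_row_sum A hA_row N) δ hδ hmδ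
        ((A ^ (n - N)).mulVec v) ((1 - m * δ) ^ ((n - N) / N) * D) hrec i j
      calc _ ≤ (1 - ↑m * δ) * ((1 - ↑m * δ) ^ ((n - N) / N) * D) := this
        _ = (1 - ↑m * δ) ^ ((n - N) / N + 1) * D := by ring
        _ = (1 - ↑m * δ) ^ (n / N) * D := by
            rw [Nat.div_eq_sub_div (by omega) hge]

lemma llcr_vec_formula (A : Matrix (Fin m) (Fin m) ℝ) (L g : ℕ → Fin m → ℝ)
    (h0 : L 0 = 0) (hrec : ∀ t, L (t + 1) = g t + A.mulVec (L t)) :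
    ∀ t, L t = ∑ s ∈ Finset.range t, (A ^ (t - 1 - s)).mulVec (g s) := by
  intro t
  induction t with
  | zero => simpa using h0
  | succ t ih =>
    rw [hrec t, ih, Finset.sum_range_succ]
    have h1 : (t + 1 - 1 - t) = 0 := by omega
    rw [h1, pow_zero]
    have h2 : ∀ s ∈ Finset.range t, (A ^ (t + 1 - 1 - s)).mulVec (g s)
        = A.mulVec ((A ^ (t - 1 - s)).mulVec (g s)) := by
      intro s hs
      rw [Matrix.mulVec_mulVec, ← pow_succ']
      have he : t + 1 - 1 - s = (t - 1 - s) + 1 := by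
        simp only [Finset.mem_range] at hs; omega
      rw [he]
    rw [Finset.sum_congr rfl h2]
    have h3 : A.mulVec (∑ s ∈ Finset.range t, (A ^ (t - 1 - s)).mulVec (g s))
        = ∑ s ∈ Finset.range t, A.mulVec ((A ^ (t - 1 - s)).mulVec (g s)) := by
      ext i
      simp only [Matrix.mulVec, dotProduct, Finset.sum_apply]
      rw [Finset.sum_comm]
      congr 1; ext k; rw [Finset.mul_sum]
    rw [h3, Matrix.one_mulVec, add_comm]

lemma llcr_mean_mulVec (B : Matrix (Fin m) (Fin m) ℝ) (hcol : ∀ j, ∑ i, B i j = 1)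
    (v : Fin m → ℝ) : ∑ i, B.mulVec v i = ∑ i, v i := by
  simp only [Matrix.mulVec, dotProduct]
  rw [Finset.sum_comm]
  refine Finset.sum_congr rfl fun j _ => ?_
  rw [← Finset.sum_mul, hcol j, one_mul]

lemma llcr_geom_div_sum_le (γ : ℝ) (hγ0 : 0 ≤ γ) (hγ1 : γ < 1) (N : ℕ) (hN : 1 ≤ N) (t : ℕ) :
    ∑ u ∈ Finset.range t, γ ^ (u / N) ≤ N / (1 - γ) := by
  have hmaps : ∀ u ∈ Finset.range t, u / N ∈ Finset.range t := by
    intro u hu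
    simp only [Finset.mem_range] at *
    exact lt_of_le_of_lt (Nat.div_le_self u N) hu
  rw [← Finset.sum_fiberwise_of_maps_to hmaps (fun u => γ ^ (u / N))]
  have hfiber : ∀ q ∈ Finset.range t,
      ∑ u ∈ (Finset.range t).filter (fun u => u / N = q), γ ^ (u / N) ≤ N * γ ^ q := by
    intro q _
    have hsub : (Finset.range t).filter (fun u => u / N = q) ⊆ Finset.Ico (N * q) (N * q + N) := by
      intro u hu
      simp only [Finset.mem_filter, Finset.mem_range] at hu
      obtain ⟨_, hq⟩ := hu
      have h1 := Nat.div_add_mod u N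
      have h2 : u % N < N := Nat.mod_lt u (by omega)
      rw [hq] at h1
      simp only [Finset.mem_Ico]
      omega
    calc ∑ u ∈ (Finset.range t).filter (fun u => u / N = q), γ ^ (u / N)
        = ∑ u ∈ (Finset.range t).filter (fun u => u / N = q), γ ^ q := by
          refine Finset.sum_congr rfl fun u hu => ?_
          simp only [Finset.mem_filter] at hu
          rw [hu.2]
      _ = ((Finset.range t).filter (fun u => u / N = q)).card * γ ^ q := by
          rw [Finset.sum_const, nsmul_eq_mul]
      _ ≤ N * γ ^ q := by
          apply mul_le_mul_of_nonneg_right _ (pow_nonneg hγ0 q)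
          have := Finset.card_le_card hsub
          rw [Nat.card_Ico] at this
          have : ((Finset.range t).filter (fun u => u / N = q)).card ≤ N := by omega
          exact_mod_cast this
  calc ∑ q ∈ Finset.range t, ∑ u ∈ (Finset.range t).filter (fun u => u / N = q), γ ^ (u / N)
      ≤ ∑ q ∈ Finset.range t, (N : ℝ) * γ ^ q := Finset.sum_le_sum hfiber
    _ = N * ∑ q ∈ Finset.range t, γ ^ q := by rw [Finset.mul_sum]
    _ ≤ N / (1 - γ) := by
        rw [div_eq_mul_inv]
        apply mul_le_mul_of_nonneg_left _ (by positivity)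
        rw [geom_sum_eq (by linarith) t]
        have h1γ : (0:ℝ) < 1 - γ := by linarith
        have heq : (γ ^ t - 1) / (γ - 1) = (1 - γ ^ t) / (1 - γ) := by
          rw [div_eq_div_iff (by linarith) (by linarith)]; ring
        rw [heq, inv_eq_one_div]
        have hpt := pow_nonneg hγ0 t
        gcongr <;> linarith

lemma llcr_coord_sub_mean_bound (A : Matrix (Fin m) (Fin m) ℝ)
    (hA_nonneg : ∀ i j, 0 ≤ A i j) (hA_row : ∀ i, ∑ j, A i j = 1)
    (N : ℕ) (hN : 1 ≤ N) (δ : ℝ) (hδ0 : 0 ≤ δ) (hδ : ∀ i j, δ ≤ (A ^ N) i j)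
    (g : ℕ → Fin m → ℝ) (B : ℕ → ℝ) (hB : ∀ s j j', g s j - g s j' ≤ B s)
    (t : ℕ) (i : Fin m) :
    |(∑ s ∈ Finset.range t, (A ^ (t - 1 - s)).mulVec (g s)) i
      - (1 / m) * ∑ j, (∑ s ∈ Finset.range t, (A ^ (t - 1 - s)).mulVec (g s)) j|
      ≤ ∑ s ∈ Finset.range t, (1 - m * δ) ^ ((t - 1 - s) / N) * B s := by
  have hm : 0 < m := i.pos
  have hmR : (0:ℝ) < m := by exact_mod_cast hm
  set w : ℕ → Fin m → ℝ := fun s => (A ^ (t - 1 - s)).mulVec (g s) with hw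
  have hLi : (∑ s ∈ Finset.range t, w s) i = ∑ s ∈ Finset.range t, w s i := by
    simp [Finset.sum_apply]
  have hLj : ∀ j, (∑ s ∈ Finset.range t, w s) j = ∑ s ∈ Finset.range t, w s j := by
    intro j; simp [Finset.sum_apply]
  have key : (∑ s ∈ Finset.range t, w s) i
      - (1 / m) * ∑ j, (∑ s ∈ Finset.range t, w s) j
      = ∑ s ∈ Finset.range t, (w s i - (1/m) * ∑ j, w s j) := by
    rw [hLi]
    rw [Finset.sum_sub_distrib]
    congr 1
    rw [← Finset.mul_sum]
    congr 1
    rw [Finset.sum_comm]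
    exact Finset.sum_congr rfl fun j _ => hLj j
  rw [key]
  refine (Finset.abs_sum_le_sum_abs _ _).trans (Finset.sum_le_sum fun s _ => ?_)
  have hosc : ∀ i' j', w s i' - w s j' ≤ (1 - m * δ) ^ ((t - 1 - s) / N) * B s :=
    fun i' j' => llcr_osc_pow A hA_nonneg hA_row N hN δ hδ0 hδ (g s) (B s)
      (fun a b => hB s a b) (t - 1 - s) i' j'
  have hmean : w s i - (1/m) * ∑ j, w s j = (1/m) * ∑ j, (w s i - w s j) := by
    rw [Finset.sum_sub_distrib, Finset.sum_const, Finset.card_univ, Fintype.card_fin]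
    field_simp
    ring
  rw [hmean, abs_mul, abs_of_pos (by positivity : (0:ℝ) < 1/(m:ℝ))]
  have habs : |∑ j, (w s i - w s j)| ≤ (m : ℝ) * ((1 - m * δ) ^ ((t - 1 - s) / N) * B s) := by
    rw [abs_le]
    constructor
    · have h5 : ∑ j, (w s j - w s i) ≤ ∑ _j : Fin m, (1 - ↑m * δ) ^ ((t - 1 - s) / N) * B s :=
        Finset.sum_le_sum fun j _ => hosc j i
      simp only [Finset.sum_const, Finset.card_univ, Fintype.card_fin, nsmul_eq_mul] at h5
      have heq : ∑ j, (w s j - w s i) = - ∑ j, (w s i - w s j) := by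
        rw [← Finset.sum_neg_distrib]; congr 1; ext j; ring
      rw [heq] at h5
      linarith
    · have h5 : ∑ j, (w s i - w s j) ≤ ∑ _j : Fin m, (1 - ↑m * δ) ^ ((t - 1 - s) / N) * B s :=
        Finset.sum_le_sum fun j _ => hosc i j
      simpa using h5
  calc (1/(m:ℝ)) * |∑ j, (w s i - w s j)|
      ≤ (1/(m:ℝ)) * ((m : ℝ) * ((1 - ↑m * δ) ^ ((t - 1 - s) / N) * B s)) := by
        apply mul_le_mul_of_nonneg_left habs (by positivity)
    _ = (1 - ↑m * δ) ^ ((t - 1 - s) / N) * B s := by field_simp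

end Det

/-! ### Stirling-type bounds -/

noncomputable def llcrRR (n : ℕ) : ℝ :=
  Real.log (n.factorial : ℝ) - ((n:ℝ) * Real.log n - n)

lemma llcrRR_eq (n : ℕ) (hn : 1 ≤ n) :
    llcrRR n = Real.log (Stirling.stirlingSeq n) + Real.log (Real.sqrt (2 * n)) := by
  have hnR : (0:ℝ) < n := by exact_mod_cast hn
  have hs : (0:ℝ) < Real.sqrt (2 * n) := Real.sqrt_pos.2 (by positivity)
  have hp : (0:ℝ) < ((n:ℝ) / Real.exp 1) ^ n := by positivity
  have hfac : (n.factorial : ℝ)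
      = Stirling.stirlingSeq n * (Real.sqrt (2 * n) * ((n:ℝ) / Real.exp 1) ^ n) := by
    rw [Stirling.stirlingSeq]
    field_simp
  have hst : (0:ℝ) < Stirling.stirlingSeq n := by
    rw [Stirling.stirlingSeq]
    positivity
  rw [llcrRR, hfac, Real.log_mul (ne_of_gt hst) (by positivity),
    Real.log_mul (ne_of_gt hs) (ne_of_gt hp),
    Real.log_pow, Real.log_div (ne_of_gt hnR) (Real.exp_ne_zero 1), Real.log_exp]
  push_cast
  ring

lemma llcrRR_bound : ∃ C : ℝ, 0 ≤ C ∧ ∀ n : ℕ, |llcrRR n| ≤ C + Real.log (n + 1) := by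
  have hst : Tendsto (fun n => Real.log (Stirling.stirlingSeq n)) atTop
      (nhds (Real.log (Real.sqrt Real.pi))) :=
    (Real.continuousAt_log (ne_of_gt (Real.sqrt_pos.2 Real.pi_pos))).tendsto.comp
      Stirling.tendsto_stirlingSeq_sqrt_pi
  obtain ⟨b, hb⟩ := hst.bddAbove_range
  obtain ⟨b', hb'⟩ := hst.bddBelow_range
  refine ⟨|b| + |b'| + Real.log 2, by positivity, fun n => ?_⟩
  rcases Nat.eq_zero_or_pos n with rfl | hn
  · have h0 : llcrRR 0 = 0 := by simp [llcrRR]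
    rw [h0, abs_zero]
    simp only [Nat.cast_zero, zero_add, Real.log_one]
    positivity
  · rw [llcrRR_eq n hn]
    have h1 : Real.log (Stirling.stirlingSeq n) ≤ b := hb ⟨n, rfl⟩
    have h2 : b' ≤ Real.log (Stirling.stirlingSeq n) := hb' ⟨n, rfl⟩
    have hnn : (1:ℝ) ≤ n := by exact_mod_cast hn
    have h3 : Real.log (Real.sqrt (2 * n)) ≤ Real.log 2 + Real.log (n + 1) := by
      rw [Real.log_sqrt (by positivity)]
      have h6 : Real.log (2 * n) ≤ Real.log (2 * (n + 1)) := by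
        apply Real.log_le_log (by positivity); linarith
      rw [Real.log_mul (by norm_num) (by linarith : (n:ℝ)+1 ≠ 0)] at h6
      have h4 : 0 ≤ Real.log (2*n) := Real.log_nonneg (by linarith)
      linarith
    have h5 : 0 ≤ Real.log (Real.sqrt (2*n)) := by
      rw [Real.log_sqrt (by positivity)]
      have := Real.log_nonneg (by linarith : (1:ℝ) ≤ 2*n); linarith
    have h6 : 0 ≤ Real.log ((n:ℝ) + 1) := Real.log_nonneg (by linarith)
    have f1 : b ≤ |b| := le_abs_self b
    have f2 : -(|b'|) ≤ b' := neg_abs_le b'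
    have f3 : 0 ≤ |b| := abs_nonneg b
    have f4 : 0 ≤ |b'| := abs_nonneg b'
    have f5 : 0 ≤ Real.log 2 := Real.log_nonneg one_le_two
    rw [abs_le]
    constructor <;> linarith

lemma llcr_tendsto_log_add_div (c : ℝ) (hc : 0 ≤ c) :
    Tendsto (fun t : ℕ => Real.log ((t : ℝ) + c) / t) atTop (nhds 0) := by
  have h1 : Tendsto (fun t : ℕ => (t : ℝ) + c) atTop atTop :=
    tendsto_atTop_add_const_right _ c tendsto_natCast_atTop_atTop
  have h2 : Tendsto (fun t : ℕ => Real.log ((t:ℝ) + c) / ((t:ℝ) + c)) atTop (nhds 0) :=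
    (Real.isLittleO_log_id_atTop.tendsto_div_nhds_zero).comp h1
  have h3 : Tendsto (fun t : ℕ => ((t:ℝ) + c) / t) atTop (nhds 1) := by
    have h0 := tendsto_const_div_atTop_nhds_zero_nat c
    have h4 : Tendsto (fun t : ℕ => 1 + c / t) atTop (nhds (1 + 0)) :=
      tendsto_const_nhds.add h0
    rw [add_zero] at h4
    apply h4.congr'
    filter_upwards [eventually_ge_atTop 1] with t ht
    have : (t:ℝ) ≠ 0 := by
      have : (1:ℝ) ≤ t := by exact_mod_cast ht
      linarith
    field_simp
  have h5 := h2.mul h3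
  rw [zero_mul] at h5
  apply h5.congr'
  filter_upwards [eventually_ge_atTop 1] with t ht
  have htR : (1:ℝ) ≤ t := by exact_mod_cast ht
  have h6 : (t:ℝ) ≠ 0 := by linarith
  have h7 : (t:ℝ) + c ≠ 0 := by linarith
  field_simp

lemma llcr_rr_div_tendsto (c : ℕ) (M : ℕ → ℕ) (hM : ∀ t, M t ≤ t + c) :
    Tendsto (fun t : ℕ => llcrRR (M t) / t) atTop (nhds 0) := by
  obtain ⟨C, hC0, hC⟩ := llcrRR_bound
  apply squeeze_zero_norm' (a := fun t : ℕ => (C + Real.log ((t:ℝ) + (c+1))) / t)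
  · filter_upwards [eventually_ge_atTop 1] with t ht
    have htR : (0:ℝ) < t := by exact_mod_cast ht
    rw [Real.norm_eq_abs, abs_div, abs_of_pos htR, div_le_div_iff_of_pos_right htR]
    refine (hC (M t)).trans ?_
    have h1 : ((M t : ℝ) + 1) ≤ (t:ℝ) + ((c:ℝ)+1) := by
      have h0 : ((M t : ℕ) : ℝ) ≤ (t:ℝ) + (c:ℝ) := by exact_mod_cast hM t
      linarith
    have h2 : Real.log ((M t : ℝ) + 1) ≤ Real.log ((t:ℝ) + ((c:ℝ)+1)) :=
      Real.log_le_log (by positivity) h1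
    linarith
  · have h1 : Tendsto (fun t : ℕ => C / (t:ℝ)) atTop (nhds 0) :=
      tendsto_const_div_atTop_nhds_zero_nat C
    have h2 := llcr_tendsto_log_add_div ((c:ℝ)+1) (by positivity)
    have h3 := h1.add h2
    rw [add_zero] at h3
    apply h3.congr
    intro t
    rw [← add_div]

/-! ### Per-agent empirical log-likelihood limit -/

lemma llcr_log_sum_range (c : ℕ) :
    ∀ t : ℕ, ∑ s ∈ Finset.range t, Real.log ((s + (c+1) : ℕ) : ℝ)
      = Real.log ((t + c).factorial : ℝ) - Real.log (c.factorial : ℝ) := by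
  intro t
  induction t with
  | zero => simp
  | succ t ih =>
    rw [Finset.sum_range_succ, ih]
    have h : (t + 1 + c) = (t + c) + 1 := by omega
    rw [h, Nat.factorial_succ]
    push_cast
    rw [Real.log_mul (by positivity)
      (by exact_mod_cast Nat.cast_ne_zero.mpr (Nat.factorial_ne_zero _))]
    ring_nf

lemma llcr_per_agent_limit {K : ℕ} (c : ℕ) (n : Fin K → ℕ → ℕ) (p θ : Fin K → ℝ)
    (hp : ∀ k, 0 < p k)
    (hsum : ∀ t, ∑ k, n k t = t)
    (hconv : ∀ k, Tendsto (fun t => (n k t : ℝ) / t) atTop (nhds (p k))) :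
    Tendsto (fun t : ℕ => (1 / (t:ℝ)) *
        (∑ k, (n k t : ℝ) * Real.log (θ k)
          + ∑ s ∈ Finset.range t, Real.log ((s + (c+1) : ℕ) : ℝ)
          - ∑ k, Real.log ((n k t).factorial : ℝ)))
      atTop (nhds (∑ k, p k * Real.log (θ k) - ∑ k, p k * Real.log (p k))) := by
  classical
  set nice : ℕ → ℝ := fun t =>
    (∑ k, ((n k t : ℝ)/t) * Real.log (θ k)
    - ∑ k, (((n k t : ℝ)/t) * Real.log ((n k t : ℝ)/t)))
    + ((Real.log ((t:ℝ) + c) - Real.log (t:ℝ))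
    + ((c:ℝ) * (Real.log ((t:ℝ) + c) / t)
    - (c:ℝ)/t)
    + (llcrRR (t + c) / t
    - ∑ k, llcrRR (n k t) / t)
    - Real.log (c.factorial : ℝ) / t)
    with hnice
  have hev : ∀ᶠ t : ℕ in atTop, (∀ k, 1 ≤ n k t) ∧ 1 ≤ t := by
    have h1 : ∀ᶠ t : ℕ in atTop, ∀ k, 1 ≤ n k t := by
      refine eventually_all.mpr fun k => ?_
      filter_upwards [(hconv k).eventually_const_lt
        (by linarith [hp k] : p k / 2 < p k),
        eventually_ge_atTop 1] with t hlt ht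
      by_contra h
      push_neg at h
      interval_cases h' : n k t
      · simp [h'] at hlt; linarith [hp k]
    filter_upwards [h1, eventually_ge_atTop 1] with t h1t ht
    exact ⟨h1t, ht⟩
  have heq : ∀ᶠ t : ℕ in atTop, (1 / (t:ℝ)) *
        (∑ k, (n k t : ℝ) * Real.log (θ k)
          + ∑ s ∈ Finset.range t, Real.log ((s + (c+1) : ℕ) : ℝ)
          - ∑ k, Real.log ((n k t).factorial : ℝ)) = nice t := by
    filter_upwards [hev] with t ⟨hn1, ht1⟩
    have htR : (0:ℝ) < t := by exact_mod_cast ht1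
    have htne : (t:ℝ) ≠ 0 := ne_of_gt htR
    rw [llcr_log_sum_range c t]
    have hfacT : Real.log ((t + c).factorial : ℝ)
        = ((t:ℝ) + c) * Real.log ((t:ℝ) + c) - ((t:ℝ) + c) + llcrRR (t + c) := by
      rw [llcrRR]; push_cast; ring
    have hfack : ∀ k, Real.log ((n k t).factorial : ℝ)
        = (n k t : ℝ) * (Real.log ((n k t : ℝ)/t) + Real.log (t:ℝ))
          - (n k t : ℝ) + llcrRR (n k t) := by
      intro k
      have hk0 : ((n k t : ℕ) : ℝ) ≠ 0 := by
        have := hn1 k; positivity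
      rw [llcrRR, Real.log_div hk0 htne]
      ring
    have hsumR : ∑ k, (n k t : ℝ) = (t:ℝ) := by exact_mod_cast hsum t
    rw [hfacT, Finset.sum_congr rfl (fun k _ => hfack k)]
    have hsplit : ∑ k, ((n k t:ℝ) * (Real.log ((n k t : ℝ)/t) + Real.log (t:ℝ))
          - (n k t : ℝ) + llcrRR (n k t))
        = (∑ k, (n k t:ℝ) * Real.log ((n k t : ℝ)/t)) + (t:ℝ) * Real.log (t:ℝ)
          - (t:ℝ) + ∑ k, llcrRR (n k t) := by
      have e1 : ∑ k, ((n k t:ℝ) * (Real.log ((n k t : ℝ)/t) + Real.log (t:ℝ))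
            - (n k t : ℝ) + llcrRR (n k t))
          = ∑ k, ((n k t:ℝ) * Real.log ((n k t : ℝ)/t))
            + ∑ k, ((n k t:ℝ) * Real.log (t:ℝ))
            - ∑ k, (n k t : ℝ) + ∑ k, llcrRR (n k t) := by
        rw [← Finset.sum_add_distrib, ← Finset.sum_sub_distrib, ← Finset.sum_add_distrib]
        exact Finset.sum_congr rfl fun k _ => by ring
      rw [e1, ← Finset.sum_mul, hsumR]
    rw [hsplit]
    have hdivsum1 : ∑ k, ((n k t : ℝ)/t) * Real.log (θ k)
        = (1/(t:ℝ)) * ∑ k, (n k t : ℝ) * Real.log (θ k) := by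
      rw [Finset.mul_sum]; exact Finset.sum_congr rfl fun k _ => by ring
    have hdivsum2 : ∑ k, (((n k t : ℝ)/t) * Real.log ((n k t : ℝ)/t))
        = (1/(t:ℝ)) * ∑ k, ((n k t : ℝ) * Real.log ((n k t : ℝ)/t)) := by
      rw [Finset.mul_sum]; exact Finset.sum_congr rfl fun k _ => by ring
    have hdivsum3 : ∑ k, llcrRR (n k t) / (t:ℝ) = (1/(t:ℝ)) * ∑ k, llcrRR (n k t) := by
      rw [Finset.mul_sum]; exact Finset.sum_congr rfl fun k _ => by ring
    rw [hnice]
    simp only []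
    rw [hdivsum1, hdivsum2, hdivsum3]
    field_simp
    ring
  have hlim : Tendsto nice atTop
      (nhds (∑ k, p k * Real.log (θ k) - ∑ k, p k * Real.log (p k))) := by
    rw [hnice]
    have l1 : Tendsto (fun t : ℕ => ∑ k, ((n k t : ℝ)/t) * Real.log (θ k)) atTop
        (nhds (∑ k, p k * Real.log (θ k))) :=
      tendsto_finset_sum _ fun k _ => (hconv k).mul_const _
    have l2 : Tendsto (fun t : ℕ => ∑ k, (((n k t : ℝ)/t) * Real.log ((n k t : ℝ)/t))) atTop
        (nhds (∑ k, p k * Real.log (p k))) := by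
      refine tendsto_finset_sum _ fun k _ => ?_
      exact (Real.continuous_mul_log.tendsto (p k)).comp (hconv k)
    have l3 : Tendsto (fun t : ℕ => Real.log ((t:ℝ) + c) - Real.log (t:ℝ)) atTop (nhds 0) := by
      have h1 : Tendsto (fun t : ℕ => ((t:ℝ) + c) / t) atTop (nhds 1) := by
        have h0 := tendsto_const_div_atTop_nhds_zero_nat (c:ℝ)
        have h4 : Tendsto (fun t : ℕ => 1 + (c:ℝ) / t) atTop (nhds (1 + 0)) :=
          tendsto_const_nhds.add h0
        rw [add_zero] at h4
        apply h4.congr'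
        filter_upwards [eventually_ge_atTop 1] with t ht
        have : (t:ℝ) ≠ 0 := by
          have : (1:ℝ) ≤ t := by exact_mod_cast ht
          linarith
        field_simp
      have h2 : Tendsto (fun t : ℕ => Real.log (((t:ℝ) + c) / t)) atTop (nhds 0) := by
        have := (Real.continuousAt_log one_ne_zero).tendsto.comp h1
        rwa [Real.log_one] at this
      apply h2.congr'
      filter_upwards [eventually_ge_atTop 1] with t ht
      have htR : (0:ℝ) < t := by exact_mod_cast ht
      rw [Real.log_div (by positivity) (ne_of_gt htR)]
    have l4 : Tendsto (fun t : ℕ => (c:ℝ) * (Real.log ((t:ℝ) + c) / t)) atTop (nhds 0) := by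
      have := (llcr_tendsto_log_add_div (c:ℝ) (by positivity)).const_mul (c:ℝ)
      rwa [mul_zero] at this
    have l5 : Tendsto (fun t : ℕ => (c:ℝ)/t) atTop (nhds 0) :=
      tendsto_const_div_atTop_nhds_zero_nat (c:ℝ)
    have l6 : Tendsto (fun t : ℕ => llcrRR (t + c) / (t:ℝ)) atTop (nhds 0) :=
      llcr_rr_div_tendsto c (fun t => t + c) (fun t => le_refl _)
    have l7 : Tendsto (fun t : ℕ => ∑ k, llcrRR (n k t) / (t:ℝ)) atTop (nhds 0) := by
      have h8 : Tendsto (fun t : ℕ => ∑ k : Fin K, llcrRR (n k t) / (t:ℝ)) atTop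
          (nhds (∑ _k : Fin K, (0:ℝ))) := by
        refine tendsto_finset_sum _ fun k _ => ?_
        refine llcr_rr_div_tendsto c (fun t => n k t) fun t => ?_
        have hle : n k t ≤ t := by
          calc n k t ≤ ∑ k', n k' t :=
                Finset.single_le_sum (f := fun k' => n k' t) (fun k' _ => Nat.zero_le _)
                  (Finset.mem_univ k)
            _ = t := hsum t
        exact hle.trans (Nat.le_add_right t c)
      simpa using h8
    have l8 : Tendsto (fun t : ℕ => Real.log (c.factorial : ℝ) / t) atTop (nhds 0) :=
      tendsto_const_div_atTop_nhds_zero_nat _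
    have hA := l1.sub l2
    have hB := l3.add (l4.sub l5)
    have hC := l6.sub l7
    have hD := (hB.add hC).sub l8
    simpa using hA.add hD
  exact Tendsto.congr' (EventuallyEq.symm heq) hlim

/-! ### Strong law for the empirical counts -/

lemma llcr_sigCount_succ {Ω : Type*} {K : ℕ} (X : ℕ → Ω → Fin K) (k : Fin K) (t : ℕ) (x : Ω) :
    sigCount X k (t+1) x = sigCount X k t x + (if X t x = k then 1 else 0) := by
  classical
  rw [sigCount, sigCount, Finset.range_add_one, Finset.filter_insert]
  by_cases h : X t x = k
  · rw [if_pos h, Finset.card_insert_of_notMem (by simp), if_pos h]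
  · rw [if_neg h, if_neg h, add_zero]

lemma llcr_sigCount_le {Ω : Type*} {K : ℕ} (X : ℕ → Ω → Fin K) (k : Fin K) (t : ℕ) (x : Ω) :
    sigCount X k t x ≤ t := by
  rw [sigCount]
  exact (Finset.card_filter_le _ _).trans_eq (Finset.card_range t)

lemma llcr_sum_sigCount {Ω : Type*} {K : ℕ} (X : ℕ → Ω → Fin K) (t : ℕ) (x : Ω) :
    ∑ k, sigCount X k t x = t := by
  classical
  have h := Finset.card_eq_sum_card_fiberwise
    (f := fun τ => X τ x) (s := Finset.range t) (t := Finset.univ)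
    (fun τ _ => Finset.mem_univ (X τ x))
  rw [Finset.card_range] at h
  exact h.symm

lemma llcr_T_formula {Ω : Type*} {K : ℕ} (X : ℕ → Ω → Fin K) (θ : Fin K → ℝ) (x : Ω) (Kc : ℕ) :
    ∀ t, ∑ s ∈ Finset.range t,
        (Real.log (θ (X s x)) + Real.log ((s + Kc : ℕ) : ℝ)
          - Real.log ((sigCount X (X s x) s x + 1 : ℕ) : ℝ))
      = ∑ k, (sigCount X k t x : ℝ) * Real.log (θ k)
        + ∑ s ∈ Finset.range t, Real.log ((s + Kc : ℕ) : ℝ)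
        - ∑ k, Real.log ((sigCount X k t x).factorial : ℝ) := by
  classical
  intro t
  induction t with
  | zero => simp [sigCount]
  | succ t ih =>
    rw [Finset.sum_range_succ, ih, Finset.sum_range_succ (fun s => Real.log ((s + Kc : ℕ) : ℝ))]
    have hθ : ∑ k, (sigCount X k (t+1) x : ℝ) * Real.log (θ k)
        = ∑ k, (sigCount X k t x : ℝ) * Real.log (θ k) + Real.log (θ (X t x)) := by
      have h : ∀ k, (sigCount X k (t+1) x : ℝ) * Real.log (θ k)
          = (sigCount X k t x : ℝ) * Real.log (θ k)
            + (if X t x = k then Real.log (θ k) else 0) := by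
        intro k
        rw [llcr_sigCount_succ]
        by_cases h : X t x = k <;> simp [h] <;> push_cast <;> ring
      rw [Finset.sum_congr rfl (fun k _ => h k), Finset.sum_add_distrib]
      congr 1
      simp
    have hfac : ∑ k, Real.log ((sigCount X k (t+1) x).factorial : ℝ)
        = ∑ k, Real.log ((sigCount X k t x).factorial : ℝ)
          + Real.log ((sigCount X (X t x) t x + 1 : ℕ) : ℝ) := by
      have h : ∀ k, Real.log ((sigCount X k (t+1) x).factorial : ℝ)
          = Real.log ((sigCount X k t x).factorial : ℝ)
            + (if X t x = k then Real.log ((sigCount X k t x + 1 : ℕ) : ℝ) else 0) := by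
        intro k
        rw [llcr_sigCount_succ]
        by_cases h : X t x = k
        · rw [if_pos h, if_pos h, Nat.factorial_succ]
          push_cast
          rw [Real.log_mul (by positivity) (by
            exact_mod_cast Nat.cast_ne_zero.mpr (Nat.factorial_ne_zero _))]
          ring
        · rw [if_neg h, if_neg h]
          simp
      rw [Finset.sum_congr rfl (fun k _ => h k), Finset.sum_add_distrib]
      congr 1
      simp
    rw [hθ, hfac]
    ring

lemma llcr_sigCount_lln
    {Ω : Type*} [MeasurableSpace Ω] (P : Measure Ω) [IsProbabilityMeasure P]
    (m K : ℕ)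
    (πstar : Fin m → Fin K → ℝ)
    (hstar_pos : ∀ i k, 0 < πstar i k)
    (X : Fin m → ℕ → Ω → Fin K) (hX_meas : ∀ i t, Measurable (X i t))
    (hX_indep : iIndepFun
      (fun p : Fin m × ℕ => X p.1 p.2) P)
    (hX_law : ∀ i t k, P {x | X i t x = k} = ENNReal.ofReal (πstar i k))
    (j : Fin m) (k : Fin K) :
    ∀ᵐ x ∂P, Tendsto (fun t : ℕ => (sigCount (X j) k t x : ℝ) / t) atTop
      (nhds (πstar j k)) := by
  classical
  set Y : ℕ → Ω → ℝ := fun s x => if X j s x = k then (1:ℝ) else 0 with hY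
  have hset : ∀ s, MeasurableSet {x | X j s x = k} :=
    fun s => (hX_meas j s) (measurableSet_singleton k)
  have hYind : ∀ s, Y s = Set.indicator {x | X j s x = k} (fun _ => (1:ℝ)) := by
    intro s; ext x
    by_cases h : X j s x = k <;> simp [hY, h, Set.indicator_apply, Set.mem_setOf_eq]
  have hint : Integrable (Y 0) P := by
    rw [hYind 0]
    exact (integrable_const (1:ℝ)).indicator (hset 0)
  have hmφ : Measurable (fun a : Fin K => if a = k then (1:ℝ) else 0) :=
    measurable_of_countable _
  have hindep : Pairwise (Function.onFun (IndepFun · · P) Y) := by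
    intro s s' hss
    have h1 : IndepFun (X j s) (X j s') P :=
      hX_indep.indepFun (by simp [hss] : ((j, s) : Fin m × ℕ) ≠ (j, s'))
    exact h1.comp hmφ hmφ
  have hident : ∀ s, IdentDistrib (Y s) (Y 0) P P := by
    intro s
    have hXid : IdentDistrib (X j s) (X j 0) P P := by
      refine ⟨(hX_meas j s).aemeasurable, (hX_meas j 0).aemeasurable, ?_⟩
      apply MeasureTheory.Measure.ext_of_singleton
      intro a
      rw [Measure.map_apply (hX_meas j s) (measurableSet_singleton a),
        Measure.map_apply (hX_meas j 0) (measurableSet_singleton a)]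
      have e1 : X j s ⁻¹' {a} = {x | X j s x = a} := by ext x; simp [Set.mem_setOf_eq]
      have e2 : X j 0 ⁻¹' {a} = {x | X j 0 x = a} := by ext x; simp [Set.mem_setOf_eq]
      rw [e1, e2, hX_law j s a, hX_law j 0 a]
    exact hXid.comp hmφ
  have hmean : P[Y 0] = πstar j k := by
    rw [hYind 0, integral_indicator_const (1:ℝ) (hset 0), measureReal_def, hX_law j 0 k]
    simp [ENNReal.toReal_ofReal (hstar_pos j k).le]
  have hsl := strong_law_ae_real Y hint hindep hident
  rw [hmean] at hsl
  filter_upwards [hsl] with x hx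
  apply hx.congr
  intro t
  congr 1
  rw [sigCount, Finset.card_filter]
  push_cast
  rfl

/-- With certain models and at least one mismatched agent, the log-linear beliefs
satisfy `(1/t) log μ_{it} → −(1/m) ∑ᵢ D_KL(π*_i ‖ π_{iθ})` in probability. -/
theorem loglinear_certain_rate
    {Ω : Type*} [MeasurableSpace Ω] (P : Measure Ω) [IsProbabilityMeasure P]
    (m : ℕ) (hm : 1 ≤ m) (K : ℕ) (hK : 2 ≤ K)
    (A : Matrix (Fin m) (Fin m) ℝ)
    (hA_nonneg : ∀ i j, 0 ≤ A i j)
    (hA_row : ∀ i, ∑ j, A i j = 1) (hA_col : ∀ j, ∑ i, A i j = 1)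
    (hA_prim : ∃ N : ℕ, 1 ≤ N ∧ ∀ i j, 0 < (A ^ N) i j)
    (πstar πθ : Fin m → Fin K → ℝ)
    (hstar_pos : ∀ i k, 0 < πstar i k) (hstar_sum : ∀ i, ∑ k, πstar i k = 1)
    (hθ_pos : ∀ i k, 0 < πθ i k) (hθ_sum : ∀ i, ∑ k, πθ i k = 1)
    (X : Fin m → ℕ → Ω → Fin K) (hX_meas : ∀ i t, Measurable (X i t))
    (hX_indep : iIndepFun
      (fun p : Fin m × ℕ => X p.1 p.2) P)
    (hX_law : ∀ i t k, P {x | X i t x = k} = ENNReal.ofReal (πstar i k))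
    (μ : ℕ → Fin m → Ω → ℝ)
    (hμ0 : ∀ i x, μ 0 i x = 1)
    (hμ : ∀ t i x, μ (t + 1) i x =
      πθ i (X i t x) * (((t + 1 + K - 1 : ℕ)) : ℝ) /
          (((sigCount (X i) (X i t x) t x + 1 : ℕ)) : ℝ) *
        ∏ j, (μ t j x) ^ (A i j))
    (hmismatch : ∃ i, πθ i ≠ πstar i) :
    ∀ i : Fin m, ∀ ε : ℝ, 0 < ε →
      Tendsto (fun t : ℕ =>
          P {x | ε < |(1 / (t : ℝ)) * Real.log (μ t i x) -
            (-((1 / (m : ℝ)) * ∑ j, KLdiv (πstar j) (πθ j)))|})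
        atTop (nhds 0) := by
  classical
  intro i ε hε
  set tgt : ℝ := -((1 / (m : ℝ)) * ∑ j, KLdiv (πstar j) (πθ j)) with htgt
  -- positivity of beliefs
  have hμpos : ∀ t j x, 0 < μ t j x := by
    intro t
    induction t with
    | zero => intro j x; rw [hμ0]; norm_num
    | succ t ih =>
      intro j x
      rw [hμ t j x]
      have h1 : (0:ℝ) < πθ j (X j t x) := hθ_pos j _
      have h2 : (0:ℝ) < ((t + 1 + K - 1 : ℕ) : ℝ) := by
        have : 0 < t + 1 + K - 1 := by omega
        exact_mod_cast this
      have h3 : (0:ℝ) < ((sigCount (X j) (X j t x) t x + 1 : ℕ) : ℝ) := by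
        exact_mod_cast Nat.succ_pos _
      have h4 : 0 < ∏ j', (μ t j' x) ^ (A j j') :=
        Finset.prod_pos fun j' _ => Real.rpow_pos_of_pos (ih j' x) _
      exact mul_pos (div_pos (mul_pos h1 h2) h3) h4
  -- measurability of beliefs
  have hμmeas : ∀ t j, Measurable (μ t j) := by
    intro t
    induction t with
    | zero =>
      intro j
      have h : μ 0 j = fun _ => (1:ℝ) := funext (hμ0 j)
      rw [h]; exact measurable_const
    | succ t ih =>
      intro j
      have h : μ (t+1) j = fun x =>
          πθ j (X j t x) * (((t + 1 + K - 1 : ℕ)) : ℝ) /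
            (((sigCount (X j) (X j t x) t x + 1 : ℕ)) : ℝ) *
          ∏ j', (μ t j' x) ^ (A j j') := funext (hμ t j)
      rw [h]
      have m1 : Measurable (fun x => πθ j (X j t x)) :=
        (measurable_of_countable _).comp (hX_meas j t)
      have m2 : Measurable (fun x => sigCount (X j) (X j t x) t x) := by
        have h2 : (fun x => sigCount (X j) (X j t x) t x)
            = fun x => ∑ τ ∈ Finset.range t, (if X j τ x = X j t x then 1 else 0) := by
          funext x; rw [sigCount, Finset.card_filter]
        rw [h2]
        apply Finset.measurable_sum
        intro τ _
        have hset : MeasurableSet {x | X j τ x = X j t x} :=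
          measurableSet_eq_fun (hX_meas j τ) (hX_meas j t)
        exact Measurable.ite hset measurable_const measurable_const
      have m2' : Measurable (fun x => ((sigCount (X j) (X j t x) t x + 1 : ℕ) : ℝ)) :=
        (measurable_of_countable (fun n : ℕ => ((n + 1 : ℕ) : ℝ))).comp m2
      have m3 : Measurable (fun x => ∏ j', (μ t j' x) ^ (A j j')) := by
        apply Finset.measurable_prod
        intro j' _
        have := ih j'
        measurability
      exact (((m1.mul measurable_const).div m2').mul m3)
  -- the primitive-power data
  obtain ⟨N, hN1, hNpos⟩ := hA_prim
  have hmi : (0:ℝ) < m := by exact_mod_cast hm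
  obtain ⟨pr, _, hprmin⟩ := Finset.exists_min_image (Finset.univ ×ˢ Finset.univ)
    (fun p : Fin m × Fin m => (A ^ N) p.1 p.2)
    ⟨(⟨0, hm⟩, ⟨0, hm⟩), by simp⟩
  set δ : ℝ := (A ^ N) pr.1 pr.2 with hδdef
  have hδpos : 0 < δ := hNpos pr.1 pr.2
  have hδle : ∀ a b : Fin m, δ ≤ (A ^ N) a b := fun a b =>
    hprmin (a, b) (by simp)
  set γ : ℝ := 1 - m * δ with hγdef
  have hγ1 : γ < 1 := by
    have : 0 < (m:ℝ) * δ := by positivity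
    rw [hγdef]; linarith
  have hγ0 : 0 ≤ γ := by
    have hsum := llcr_pow_row_sum A hA_row N ⟨0, hm⟩
    have hle : (m:ℝ) * δ ≤ 1 := by
      have he : (m : ℝ) * δ = ∑ _k : Fin m, δ := by simp [mul_comm]
      rw [he, ← hsum]
      exact Finset.sum_le_sum fun k _ => hδle _ k
    rw [hγdef]; linarith
  -- the innovation terms
  set g : ℕ → Fin m → Ω → ℝ := fun s j x =>
    Real.log (πθ j (X j s x)) + Real.log ((s + K : ℕ) : ℝ)
      - Real.log ((sigCount (X j) (X j s x) s x + 1 : ℕ) : ℝ) with hgdef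
  -- uniform oscillation bound for g
  set Cθ : ℝ := ∑ j, ∑ k, |Real.log (πθ j k)| with hCθdef
  have hCθ : ∀ j k, |Real.log (πθ j k)| ≤ Cθ := by
    intro j k
    rw [hCθdef]
    calc |Real.log (πθ j k)| ≤ ∑ k', |Real.log (πθ j k')| :=
          Finset.single_le_sum (f := fun k' => |Real.log (πθ j k')|)
            (fun k' _ => abs_nonneg _) (Finset.mem_univ k)
      _ ≤ ∑ j', ∑ k', |Real.log (πθ j' k')| :=
          Finset.single_le_sum (f := fun j' => ∑ k', |Real.log (πθ j' k')|)
            (fun j' _ => Finset.sum_nonneg fun k' _ => abs_nonneg _) (Finset.mem_univ j)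
  have hCθ0 : 0 ≤ Cθ := (abs_nonneg _).trans (hCθ i ⟨0, by omega⟩)
  set B : ℕ → ℝ := fun s => 2 * (Cθ + Real.log ((s:ℝ) + K) + Real.log ((s:ℝ) + 1)) with hBdef
  have hgbound : ∀ s (x : Ω) j, |g s j x| ≤ Cθ + Real.log ((s:ℝ) + K) + Real.log ((s:ℝ) + 1) := by
    intro s x j
    have hc1 : Real.log ((s + K : ℕ) : ℝ) = Real.log ((s:ℝ) + K) := by push_cast; ring_nf
    have hc2 : (0:ℝ) ≤ Real.log ((s:ℝ) + K) := by
      apply Real.log_nonneg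
      have : (2:ℝ) ≤ K := by exact_mod_cast hK
      have : (0:ℝ) ≤ s := Nat.cast_nonneg s
      linarith
    have hc3 : (0:ℝ) ≤ Real.log ((sigCount (X j) (X j s x) s x + 1 : ℕ) : ℝ) := by
      apply Real.log_nonneg
      have : (1:ℕ) ≤ sigCount (X j) (X j s x) s x + 1 := by omega
      exact_mod_cast this
    have hc4 : Real.log ((sigCount (X j) (X j s x) s x + 1 : ℕ) : ℝ)
        ≤ Real.log ((s:ℝ) + 1) := by
      apply Real.log_le_log
      · have : (1:ℕ) ≤ sigCount (X j) (X j s x) s x + 1 := by omega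
        exact_mod_cast Nat.cast_pos.mpr this
      · have := llcr_sigCount_le (X j) (X j s x) s x
        have : (sigCount (X j) (X j s x) s x + 1 : ℕ) ≤ s + 1 := by omega
        exact_mod_cast this
    have hc5 : |Real.log (πθ j (X j s x))| ≤ Cθ := hCθ j _
    rw [hgdef]
    simp only []
    rw [hc1]
    have htri : |Real.log (πθ j (X j s x)) + Real.log ((s:ℝ) + K)
        - Real.log ((sigCount (X j) (X j s x) s x + 1 : ℕ) : ℝ)|
        ≤ |Real.log (πθ j (X j s x))| + Real.log ((s:ℝ) + K)
          + Real.log ((sigCount (X j) (X j s x) s x + 1 : ℕ) : ℝ) := by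
      rw [abs_le]
      constructor
      · have := neg_abs_le (Real.log (πθ j (X j s x))); linarith
      · have := le_abs_self (Real.log (πθ j (X j s x))); linarith
    calc _ ≤ _ := htri
      _ ≤ Cθ + Real.log ((s:ℝ) + K) + Real.log ((s:ℝ) + 1) := by linarith
  have hgB : ∀ s (x : Ω) j j', g s j x - g s j' x ≤ B s := by
    intro s x j j'
    have h1 := hgbound s x j
    have h2 := hgbound s x j'
    rw [hBdef]
    have := le_abs_self (g s j x)
    have := neg_abs_le (g s j' x)
    have := abs_le.mp h1
    have := abs_le.mp h2
    simp only []
    linarith [abs_le.mp h1, abs_le.mp h2]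
  have hB0 : ∀ s, 0 ≤ B s := by
    intro s
    have hc2 : (0:ℝ) ≤ Real.log ((s:ℝ) + K) := by
      apply Real.log_nonneg
      have h7 : (2:ℝ) ≤ K := by exact_mod_cast hK
      have h8 : (0:ℝ) ≤ s := Nat.cast_nonneg s
      linarith
    have hc3 : (0:ℝ) ≤ Real.log ((s:ℝ) + 1) := by
      apply Real.log_nonneg
      have h8 : (0:ℝ) ≤ s := Nat.cast_nonneg s
      linarith
    rw [hBdef]
    simp only []
    linarith
  -- log-recursion in vector form
  have hlog0 : ∀ x : Ω, (fun j => Real.log (μ 0 j x)) = (0 : Fin m → ℝ) := by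
    intro x; funext j; rw [hμ0]; simp
  have hidx : ∀ t : ℕ, t + 1 + K - 1 = t + K := by intro t; omega
  have hlogrec : ∀ (x : Ω) (t : ℕ), (fun j => Real.log (μ (t+1) j x))
      = (fun j => g t j x) + A.mulVec (fun j => Real.log (μ t j x)) := by
    intro x t
    funext j
    rw [hμ t j x]
    have h1 : (0:ℝ) < πθ j (X j t x) := hθ_pos j _
    have h2 : (0:ℝ) < ((t + 1 + K - 1 : ℕ) : ℝ) := by
      have : 0 < t + 1 + K - 1 := by omega
      exact_mod_cast this
    have h3 : (0:ℝ) < ((sigCount (X j) (X j t x) t x + 1 : ℕ) : ℝ) := by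
      exact_mod_cast Nat.succ_pos _
    have h4 : ∀ j' ∈ Finset.univ, (μ t j' x) ^ (A j j') ≠ (0:ℝ) :=
      fun j' _ => ne_of_gt (Real.rpow_pos_of_pos (hμpos t j' x) _)
    rw [Real.log_mul (by positivity) (Finset.prod_ne_zero_iff.mpr h4),
      Real.log_div (by positivity) (ne_of_gt h3),
      Real.log_mul (ne_of_gt h1) (ne_of_gt h2),
      Real.log_prod h4]
    have h5 : ∀ j' ∈ Finset.univ, Real.log ((μ t j' x) ^ (A j j'))
        = A j j' * Real.log (μ t j' x) :=
      fun j' _ => Real.log_rpow (hμpos t j' x) _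
    rw [Finset.sum_congr rfl h5]
    have h6 : A.mulVec (fun j'' => Real.log (μ t j'' x)) j
        = ∑ j', A j j' * Real.log (μ t j' x) := by
      simp [Matrix.mulVec, dotProduct]
    simp only [Pi.add_apply, h6, hgdef, hidx t]
  have hform : ∀ (x : Ω) (t : ℕ), (fun j => Real.log (μ t j x))
      = ∑ s ∈ Finset.range t, (A ^ (t - 1 - s)).mulVec (fun j => g s j x) := by
    intro x
    exact llcr_vec_formula A (fun t j => Real.log (μ t j x)) (fun s j => g s j x)
      (hlog0 x) (fun t => hlogrec x t)
  -- deterministic consensus bound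
  have hdet : ∀ (x : Ω) (t : ℕ),
      |Real.log (μ t i x) - (1/(m:ℝ)) * ∑ j, Real.log (μ t j x)|
        ≤ ((N:ℝ)/(1-γ)) * B t := by
    intro x t
    have hb1 := llcr_coord_sub_mean_bound A hA_nonneg hA_row N hN1 δ hδpos.le hδle
      (fun s j => g s j x) B (fun s j j' => hgB s x j j') t i
    have he1 : (fun j => Real.log (μ t j x)) i = Real.log (μ t i x) := rfl
    rw [← he1, hform x t]
    have he2 : ∀ j : Fin m, (fun j' => Real.log (μ t j' x)) j = Real.log (μ t j x) :=
      fun j => rfl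
    have hb2 : ∑ s ∈ Finset.range t, (1 - ↑m * δ) ^ ((t - 1 - s) / N) * B s
        ≤ ((N:ℝ)/(1-γ)) * B t := by
      have hmono : ∀ s ∈ Finset.range t,
          (1 - ↑m * δ) ^ ((t - 1 - s) / N) * B s
            ≤ (1 - ↑m * δ) ^ ((t - 1 - s) / N) * B t := by
        intro s hs
        simp only [Finset.mem_range] at hs
        apply mul_le_mul_of_nonneg_left _ (pow_nonneg (by rw [← hγdef]; exact hγ0) _)
        rw [hBdef]
        simp only []
        have hsK : (s:ℝ) ≤ (t:ℝ) := by exact_mod_cast hs.le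
        have hl1 : Real.log ((s:ℝ) + K) ≤ Real.log ((t:ℝ) + K) := by
          apply Real.log_le_log _ (by linarith)
          have hKr : (2:ℝ) ≤ K := by exact_mod_cast hK
          have := Nat.cast_nonneg (α := ℝ) s
          linarith
        have hl2 : Real.log ((s:ℝ) + 1) ≤ Real.log ((t:ℝ) + 1) := by
          apply Real.log_le_log _ (by linarith)
          have := Nat.cast_nonneg (α := ℝ) s
          linarith
        linarith
      calc ∑ s ∈ Finset.range t, (1 - ↑m * δ) ^ ((t - 1 - s) / N) * B s
          ≤ ∑ s ∈ Finset.range t, (1 - ↑m * δ) ^ ((t - 1 - s) / N) * B t :=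
            Finset.sum_le_sum hmono
        _ = (∑ s ∈ Finset.range t, (1 - ↑m * δ) ^ ((t - 1 - s) / N)) * B t := by
            rw [Finset.sum_mul]
        _ = (∑ u ∈ Finset.range t, (1 - ↑m * δ) ^ (u / N)) * B t := by
            congr 1
            exact Finset.sum_range_reflect (fun u => (1 - ↑m * δ) ^ (u / N)) t
        _ ≤ ((N:ℝ)/(1-γ)) * B t := by
            apply mul_le_mul_of_nonneg_right _ (hB0 t)
            have := llcr_geom_div_sum_le γ hγ0 hγ1 N hN1 t
            rw [hγdef] at this
            exact this
    calc |(∑ s ∈ Finset.range t, (A ^ (t - 1 - s)).mulVec fun j => g s j x) i -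
        1 / ↑m * ∑ j, (∑ s ∈ Finset.range t, (A ^ (t - 1 - s)).mulVec fun j' => g s j' x) j|
        ≤ ∑ s ∈ Finset.range t, (1 - ↑m * δ) ^ ((t - 1 - s) / N) * B s := hb1
      _ ≤ ((N:ℝ)/(1-γ)) * B t := hb2
  -- rate function tends to zero
  have hφ : Tendsto (fun t : ℕ => (1/(t:ℝ)) * (((N:ℝ)/(1-γ)) * B t)) atTop (nhds 0) := by
    have h1 : Tendsto (fun t : ℕ => Cθ / (t:ℝ)) atTop (nhds 0) :=
      tendsto_const_div_atTop_nhds_zero_nat Cθ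
    have h2 : Tendsto (fun t : ℕ => Real.log ((t:ℝ) + K) / t) atTop (nhds 0) :=
      llcr_tendsto_log_add_div (K:ℝ) (by positivity)
    have h3 : Tendsto (fun t : ℕ => Real.log ((t:ℝ) + 1) / t) atTop (nhds 0) :=
      llcr_tendsto_log_add_div 1 (by norm_num)
    have h4 := ((h1.add h2).add h3).const_mul (((N:ℝ)/(1-γ)) * 2)
    rw [add_zero, add_zero, mul_zero] at h4
    apply h4.congr
    intro t
    rw [hBdef]
    simp only []
    rcases eq_or_ne (t:ℝ) 0 with h | h
    · rw [h]; simp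
    · field_simp
  -- a.e. convergence of the normalized log-beliefs
  have hae : ∀ᵐ x ∂P, ∀ (j : Fin m) (k : Fin K),
      Tendsto (fun t : ℕ => (sigCount (X j) k t x : ℝ)/t) atTop (nhds (πstar j k)) := by
    rw [ae_all_iff]
    intro j
    rw [ae_all_iff]
    intro k
    exact llcr_sigCount_lln P m K πstar hstar_pos X hX_meas hX_indep hX_law j k
  have haeZ : ∀ᵐ x ∂P, Tendsto (fun t : ℕ => (1/(t:ℝ)) * Real.log (μ t i x))
      atTop (nhds tgt) := by
    filter_upwards [hae] with x hx
    -- per-agent limits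
    have hTj : ∀ j : Fin m, Tendsto (fun t : ℕ => (1/(t:ℝ)) * ∑ s ∈ Finset.range t, g s j x)
        atTop (nhds (-(KLdiv (πstar j) (πθ j)))) := by
      intro j
      have happ := llcr_per_agent_limit (K-1) (fun k t => sigCount (X j) k t x)
        (πstar j) (πθ j) (fun k => hstar_pos j k) (fun t => llcr_sum_sigCount (X j) t x)
        (fun k => hx j k)
      have hK1 : K - 1 + 1 = K := by omega
      rw [hK1] at happ
      have hval : ∑ k, πstar j k * Real.log (πθ j k)
          - ∑ k, πstar j k * Real.log (πstar j k)
          = -(KLdiv (πstar j) (πθ j)) := by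
        have h9 : ∀ k ∈ Finset.univ, πstar j k * Real.log (πstar j k / πθ j k)
            = πstar j k * Real.log (πstar j k) - πstar j k * Real.log (πθ j k) := by
          intro k _
          rw [Real.log_div (ne_of_gt (hstar_pos j k)) (ne_of_gt (hθ_pos j k))]
          ring
        rw [KLdiv, Finset.sum_congr rfl h9, Finset.sum_sub_distrib]
        ring
      rw [hval] at happ
      apply happ.congr
      intro t
      congr 1
      rw [hgdef]
      exact (llcr_T_formula (X j) (πθ j) x K t).symm
    -- mean identity
    have hmeanT : ∀ t : ℕ, ∑ j, Real.log (μ t j x) = ∑ j, ∑ s ∈ Finset.range t, g s j x := by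
      intro t
      have h1 : ∀ j : Fin m, Real.log (μ t j x)
          = (∑ s ∈ Finset.range t, (A ^ (t - 1 - s)).mulVec (fun j' => g s j' x)) j := by
        intro j
        have := congrFun (hform x t) j
        exact this
      rw [Finset.sum_congr rfl fun j _ => h1 j]
      have h2 : ∀ j : Fin m, (∑ s ∈ Finset.range t, (A ^ (t - 1 - s)).mulVec
          (fun j' => g s j' x)) j
          = ∑ s ∈ Finset.range t, ((A ^ (t - 1 - s)).mulVec (fun j' => g s j' x)) j := by
        intro j; simp [Finset.sum_apply]
      rw [Finset.sum_congr rfl fun j _ => h2 j, Finset.sum_comm]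
      rw [show (∑ j : Fin m, ∑ s ∈ Finset.range t, g s j x)
          = ∑ s ∈ Finset.range t, ∑ j : Fin m, g s j x from Finset.sum_comm]
      refine Finset.sum_congr rfl fun s _ => ?_
      exact llcr_mean_mulVec (A ^ (t - 1 - s))
        (llcr_pow_col_sum A hA_col (t - 1 - s)) (fun j' => g s j' x)
    -- limit of the mean part
    have hmeanlim : Tendsto (fun t : ℕ => (1/(t:ℝ)) * ((1/(m:ℝ)) * ∑ j, Real.log (μ t j x)))
        atTop (nhds tgt) := by
      have h1 : Tendsto (fun t : ℕ => ∑ j, ((1/(t:ℝ)) * ∑ s ∈ Finset.range t, g s j x))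
          atTop (nhds (∑ j, -(KLdiv (πstar j) (πθ j)))) :=
        tendsto_finset_sum _ fun j _ => hTj j
      have h2 := h1.const_mul (1/(m:ℝ))
      have h3 : (1/(m:ℝ)) * ∑ j, -(KLdiv (πstar j) (πθ j)) = tgt := by
        rw [htgt, Finset.sum_neg_distrib]
        ring
      rw [h3] at h2
      apply h2.congr
      intro t
      rw [hmeanT t, Finset.mul_sum, Finset.mul_sum, Finset.mul_sum]
      refine Finset.sum_congr rfl fun j _ => by ring
    -- squeeze
    have hgap : Tendsto (fun t : ℕ => (1/(t:ℝ)) * Real.log (μ t i x)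
        - (1/(t:ℝ)) * ((1/(m:ℝ)) * ∑ j, Real.log (μ t j x))) atTop (nhds 0) := by
      apply squeeze_zero_norm (a := fun t : ℕ => (1/(t:ℝ)) * (((N:ℝ)/(1-γ)) * B t)) _ hφ
      intro t
      have h1 : (1/(t:ℝ)) * Real.log (μ t i x)
          - (1/(t:ℝ)) * ((1/(m:ℝ)) * ∑ j, Real.log (μ t j x))
          = (1/(t:ℝ)) * (Real.log (μ t i x) - (1/(m:ℝ)) * ∑ j, Real.log (μ t j x)) := by
        ring
      rw [Real.norm_eq_abs, h1, abs_mul, abs_of_nonneg (by positivity : (0:ℝ) ≤ 1/(t:ℝ))]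
      exact mul_le_mul_of_nonneg_left (hdet x t) (by positivity)
    have := hgap.add hmeanlim
    rw [zero_add] at this
    apply this.congr
    intro t
    ring
  -- convergence in probability
  have hZmeas : ∀ t : ℕ, AEStronglyMeasurable
      (fun x => (1/(t:ℝ)) * Real.log (μ t i x)) P := by
    intro t
    exact ((Real.measurable_log.comp (hμmeas t i)).const_mul _).aestronglyMeasurable
  have htim : TendstoInMeasure P (fun (t : ℕ) x => (1/(t:ℝ)) * Real.log (μ t i x)) atTop
      (fun _ => tgt) :=
    tendstoInMeasure_of_tendsto_ae hZmeas haeZ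
  have h1 := htim (ENNReal.ofReal ε) (ENNReal.ofReal_pos.2 hε)
  apply tendsto_of_tendsto_of_tendsto_of_le_of_le tendsto_const_nhds h1
  · intro t; exact zero_le
  · intro t
    apply measure_mono
    intro x hxx
    simp only [Set.mem_setOf_eq] at *
    rw [edist_dist, Real.dist_eq]
    exact ENNReal.ofReal_le_ofReal (le_of_lt hxx)
end

section
/- The Centralized Average divergence is sandwiched by the average Kullback–Leibler divergence: (1/m) ∑_{i=1}^m D_KL(π*_i ‖ π_{iθ}) ≥ D_CA(Π*‖Π_θ) ≥ 0. Moreover, D_CA(Π*‖Π_θ) = 0 if and only if π_{iθ} = π*_i for every i. -/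
open Finset

/-- Centralized Average divergence: `D_CA(Π*‖Π_θ) =
−∑_{k_1,…,k_m} (∏ᵢ π*_{i kᵢ}) log((1/m) ∑ᵢ π_{i kᵢ θ}/π*_{i kᵢ})`. -/
noncomputable def DCA {m K : ℕ} (πstar πθ : Fin m → Fin K → ℝ) : ℝ :=
  -∑ κ : Fin m → Fin K,
      (∏ i, πstar i (κ i)) * Real.log ((1 / (m : ℝ)) * ∑ i, πθ i (κ i) / πstar i (κ i))

lemma prod_sum_pi {m K : ℕ} (g : Fin m → Fin K → ℝ) :
    ∑ κ : Fin m → Fin K, ∏ i, g i (κ i) = ∏ i, ∑ k, g i k := by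
  rw [Finset.prod_univ_sum]
  simp

lemma sum_pi_mul {m K : ℕ} (πs : Fin m → Fin K → ℝ) (hs : ∀ i, ∑ k, πs i k = 1)
    (j : Fin m) (h : Fin K → ℝ) :
    ∑ κ : Fin m → Fin K, (∏ i, πs i (κ i)) * h (κ j) = ∑ k, πs j k * h k := by
  have key : ∀ κ : Fin m → Fin K, (∏ i, πs i (κ i)) * h (κ j)
      = ∏ i, (πs i (κ i) * if i = j then h (κ i) else 1) := by
    intro κ
    rw [Finset.prod_mul_distrib, Finset.prod_ite_eq' univ j (fun i => h (κ i))]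
    simp
  simp_rw [key]
  rw [prod_sum_pi (fun i k => πs i k * if i = j then h k else 1)]
  rw [Finset.prod_eq_single j]
  · simp
  · intro i _ hij; simp [hij, hs i]
  · simp


/-- The CA divergence is sandwiched between `0` and the average KL divergence,
with `D_CA = 0` iff `π_{iθ} = π*_i` for every `i`. -/
theorem DCA_sandwich (m K : ℕ) (hm : 1 ≤ m) (hK : 2 ≤ K)
    (πstar πθ : Fin m → Fin K → ℝ)
    (hstar_pos : ∀ i k, 0 < πstar i k) (hθ_pos : ∀ i k, 0 < πθ i k)
    (hstar_sum : ∀ i, ∑ k, πstar i k = 1) (hθ_sum : ∀ i, ∑ k, πθ i k = 1) :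
    DCA πstar πθ ≤ (1 / (m : ℝ)) * ∑ i, KLdiv (πstar i) (πθ i) ∧
      0 ≤ DCA πstar πθ ∧
      (DCA πstar πθ = 0 ↔ ∀ i, πθ i = πstar i) := by
  have hmpos : (0:ℝ) < m := by exact_mod_cast hm
  have hKpos : 0 < K := by omega
  set r : Fin m → Fin K → ℝ := fun i k => πθ i k / πstar i k with hrdef
  set f : (Fin m → Fin K) → ℝ := fun κ => (1 / (m : ℝ)) * ∑ i, r i (κ i) with hfdef
  set P : (Fin m → Fin K) → ℝ := fun κ => ∏ i, πstar i (κ i) with hPdef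
  have hr_pos : ∀ i k, 0 < r i k := fun i k => div_pos (hθ_pos i k) (hstar_pos i k)
  have hP_pos : ∀ κ, 0 < P κ := fun κ => Finset.prod_pos fun i _ => hstar_pos i (κ i)
  have hne : (univ : Finset (Fin m)).Nonempty := ⟨⟨0, by omega⟩, mem_univ _⟩
  have hf_pos : ∀ κ, 0 < f κ := fun κ => by
    apply mul_pos (by positivity)
    exact Finset.sum_pos (fun i _ => hr_pos i (κ i)) hne
  have hDCA : DCA πstar πθ = -∑ κ : Fin m → Fin K, P κ * Real.log (f κ) := rfl
  have hPsum : ∑ κ : Fin m → Fin K, P κ = 1 := by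
    rw [hPdef, prod_sum_pi]
    simp [hstar_sum]
  have hPr : ∀ j, ∑ κ : Fin m → Fin K, P κ * r j (κ j) = 1 := by
    intro j
    rw [hPdef, sum_pi_mul πstar hstar_sum j (r j)]
    have : ∀ k, πstar j k * r j k = πθ j k := fun k => by
      rw [hrdef, mul_comm]
      exact div_mul_cancel₀ _ (hstar_pos j k).ne'
    simp_rw [this]
    exact hθ_sum j
  have hPf : ∑ κ : Fin m → Fin K, P κ * f κ = 1 := by
    have : ∀ κ, P κ * f κ = (1 / (m : ℝ)) * ∑ i, P κ * r i (κ i) := by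
      intro κ; rw [hfdef, Finset.mul_sum]; ring_nf
      rw [Finset.mul_sum]
    simp_rw [this]
    rw [← Finset.mul_sum, Finset.sum_comm]
    simp_rw [hPr]
    simp
    field_simp
  -- nonnegativity
  have hlog_le : ∀ κ, P κ * Real.log (f κ) ≤ P κ * (f κ - 1) := fun κ =>
    mul_le_mul_of_nonneg_left (Real.log_le_sub_one_of_pos (hf_pos κ)) (hP_pos κ).le
  have hsum_sub : ∑ κ : Fin m → Fin K, P κ * (f κ - 1) = 0 := by
    simp_rw [mul_sub, mul_one, Finset.sum_sub_distrib, hPf, hPsum]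
    ring
  have hnonneg : 0 ≤ DCA πstar πθ := by
    rw [hDCA, neg_nonneg]
    calc ∑ κ : Fin m → Fin K, P κ * Real.log (f κ)
        ≤ ∑ κ : Fin m → Fin K, P κ * (f κ - 1) := Finset.sum_le_sum fun κ _ => hlog_le κ
      _ = 0 := hsum_sub
  -- upper bound
  have jensen : ∀ κ : Fin m → Fin K,
      (1 / (m : ℝ)) * ∑ i, Real.log (r i (κ i)) ≤ Real.log (f κ) := by
    intro κ
    have hcc := (strictConcaveOn_log_Ioi.concaveOn).le_map_sum
      (t := univ) (w := fun _ : Fin m => 1 / (m : ℝ)) (p := fun i => r i (κ i))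
      (fun i _ => by positivity)
      (by simp; field_simp)
      (fun i _ => Set.mem_Ioi.mpr (hr_pos i (κ i)))
    simpa [smul_eq_mul, ← Finset.mul_sum, hfdef] using hcc
  have hupper : DCA πstar πθ ≤ (1 / (m : ℝ)) * ∑ i, KLdiv (πstar i) (πθ i) := by
    rw [hDCA]
    have step1 : -∑ κ : Fin m → Fin K, P κ * Real.log (f κ)
        ≤ -∑ κ : Fin m → Fin K, P κ * ((1 / (m : ℝ)) * ∑ i, Real.log (r i (κ i))) := by
      apply neg_le_neg
      exact Finset.sum_le_sum fun κ _ =>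
        mul_le_mul_of_nonneg_left (jensen κ) (hP_pos κ).le
    refine step1.trans_eq ?_
    have swap : ∑ κ : Fin m → Fin K, P κ * ((1 / (m : ℝ)) * ∑ i, Real.log (r i (κ i)))
        = (1 / (m : ℝ)) * ∑ i : Fin m, ∑ κ : Fin m → Fin K, P κ * Real.log (r i (κ i)) := by
      calc ∑ κ : Fin m → Fin K, P κ * ((1 / (m : ℝ)) * ∑ i, Real.log (r i (κ i)))
          = ∑ κ : Fin m → Fin K, ∑ i : Fin m,
              (1 / (m : ℝ)) * (P κ * Real.log (r i (κ i))) := by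
            refine Finset.sum_congr rfl fun κ _ => ?_
            rw [Finset.mul_sum, Finset.mul_sum]
            exact Finset.sum_congr rfl fun i _ => by ring
        _ = ∑ i : Fin m, ∑ κ : Fin m → Fin K,
              (1 / (m : ℝ)) * (P κ * Real.log (r i (κ i))) := Finset.sum_comm
        _ = (1 / (m : ℝ)) * ∑ i : Fin m, ∑ κ : Fin m → Fin K,
              P κ * Real.log (r i (κ i)) := by
            rw [Finset.mul_sum]
            exact Finset.sum_congr rfl fun i _ => (Finset.mul_sum _ _ _).symm
    rw [swap]
    have inner : ∀ i, ∑ κ : Fin m → Fin K, P κ * Real.log (r i (κ i))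
        = -KLdiv (πstar i) (πθ i) := by
      intro i
      rw [hPdef, sum_pi_mul πstar hstar_sum i (fun k => Real.log (r i k))]
      rw [KLdiv, ← Finset.sum_neg_distrib]
      congr 1; ext k
      rw [hrdef]
      rw [Real.log_div (hθ_pos i k).ne' (hstar_pos i k).ne',
          Real.log_div (hstar_pos i k).ne' (hθ_pos i k).ne']
      ring
    simp_rw [inner]
    rw [Finset.sum_neg_distrib]
    ring
  refine ⟨hupper, hnonneg, ?_, ?_⟩
  · -- DCA = 0 → πθ = πstar
    intro h0
    have hzero : ∑ κ : Fin m → Fin K, P κ * ((f κ - 1) - Real.log (f κ)) = 0 := by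
      have hsplit : ∀ κ : Fin m → Fin K, P κ * ((f κ - 1) - Real.log (f κ))
          = P κ * (f κ - 1) - P κ * Real.log (f κ) := fun κ => mul_sub _ _ _
      rw [Finset.sum_congr rfl fun κ _ => hsplit κ, Finset.sum_sub_distrib, hsum_sub]
      rw [hDCA] at h0
      linarith
    have hterm : ∀ κ : Fin m → Fin K, f κ = 1 := by
      intro κ
      have heach := (Finset.sum_eq_zero_iff_of_nonneg (fun κ _ => by
        have := Real.log_le_sub_one_of_pos (hf_pos κ)
        have := (hP_pos κ).le
        nlinarith)).mp hzero κ (mem_univ κ)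
      have h1 : (f κ - 1) - Real.log (f κ) = 0 := by
        have := (hP_pos κ).ne'
        rcases mul_eq_zero.mp heach with h | h
        · exact absurd h this
        · exact h
      by_contra hne1
      have := Real.log_lt_sub_one_of_pos (hf_pos κ) hne1
      linarith
    -- from f ≡ 1 deduce r i constant, hence = 1
    intro i
    set κ₀ : Fin m → Fin K := fun _ => ⟨0, hKpos⟩ with hκ₀
    have hup : ∀ k : Fin K, ∑ j, r j (Function.update κ₀ i k j)
        = r i k + ∑ j ∈ univ \ {i}, r j (κ₀ j) := by
      intro k
      have : (fun j => r j (Function.update κ₀ i k j))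
          = Function.update (fun j => r j (κ₀ j)) i (r i k) := by
        funext j
        by_cases hj : j = i
        · subst hj; simp
        · simp [Function.update_apply, hj]
      rw [this, Finset.sum_update_of_mem (mem_univ i)]
      
    have hconst : ∀ k : Fin K, r i k = r i ⟨0, hKpos⟩ := by
      intro k
      have h1 := hterm (Function.update κ₀ i k)
      have h2 := hterm (Function.update κ₀ i ⟨0, hKpos⟩)
      rw [hfdef] at h1 h2
      simp only at h1 h2
      rw [hup k] at h1
      rw [hup ⟨0, hKpos⟩] at h2
      have hm0 : (1 / (m:ℝ)) ≠ 0 := by positivity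
      have := h1.trans h2.symm
      have := mul_left_cancel₀ hm0 this
      linarith
    have hc1 : r i ⟨0, hKpos⟩ = 1 := by
      have : ∑ k, πθ i k = ∑ k, r i ⟨0, hKpos⟩ * πstar i k := by
        apply Finset.sum_congr rfl
        intro k _
        rw [← hconst k, hrdef]
        exact (div_mul_cancel₀ _ (hstar_pos i k).ne').symm
      rw [hθ_sum i, ← Finset.mul_sum, hstar_sum i, mul_one] at this
      exact this.symm
    funext k
    have : r i k = 1 := (hconst k).trans hc1
    rw [hrdef] at this
    exact (div_eq_one_iff_eq (hstar_pos i k).ne').mp this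
  · -- πθ = πstar → DCA = 0
    intro h
    have : ∀ κ : Fin m → Fin K, f κ = 1 := by
      intro κ
      rw [hfdef]
      have : ∀ i : Fin m, r i (κ i) = 1 := fun i => by
        rw [hrdef]; simp [h i]; exact (hstar_pos i (κ i)).ne'
      simp only
      simp_rw [this]
      simp
      field_simp
    rw [hDCA]
    simp_rw [this]
    simp
end
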